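/- Let (G,I,O,λ) be a labelled open graph with gflow, and let G' be the induced subgraph on V' = O ∪ {v ∈ V : λ(v) = XY}, with λ' the restriction of λ. Then (G',I,O,λ') has a gflow. -/

import Mathlib

open Set

/-- The three measurement planes. -/
inductive MPlane | XY | XZ | YZ
deriving DecidableEq

/-- The odd neighbourhood of a set `K`: vertices with an odd number of neighbours in `K`. -/
def oddNbhd {V : Type*} (G : SimpleGraph V) (K : Set V) : Set V :=
  {u | Odd (K ∩ G.neighborSet u).ncard}

/-- `(g, prec)` is a gflow for the labelled open graph `(G, I, O, lam)`. -/
structure GFlow {V : Type*} (G : SimpleGraph V) (I O : Set V) (lam : V → MPlane)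
    (g : V → Set V) (prec : V → V → Prop) : Prop where
  irrefl : ∀ v, ¬ prec v v
  trans : ∀ u v w, prec u v → prec v w → prec u w
  noInput : ∀ v, v ∉ O → g v ∩ I = ∅
  g1 : ∀ v, v ∉ O → ∀ w ∈ g v, w ≠ v → prec v w
  g2 : ∀ v, v ∉ O → ∀ w ∈ oddNbhd G (g v), w ≠ v → prec v w
  gXY : ∀ v, v ∉ O → lam v = MPlane.XY → v ∉ g v ∧ v ∈ oddNbhd G (g v)
  gXZ : ∀ v, v ∉ O → lam v = MPlane.XZ → v ∈ g v ∧ v ∈ oddNbhd G (g v)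
  gYZ : ∀ v, v ∉ O → lam v = MPlane.YZ → v ∈ g v ∧ v ∉ oddNbhd G (g v)

section Aux

variable {V : Type*} [Fintype V]

open Classical in
/-- Characteristic function of a set, with values in `ZMod 2`. -/
noncomputable def chi (K : Set V) : V → ZMod 2 := fun x => if x ∈ K then 1 else 0

open Classical in
/-- `ZMod 2` indicator of the odd neighbourhood of (the support of) `f`. -/
noncomputable def oN (G : SimpleGraph V) (f : V → ZMod 2) (u : V) : ZMod 2 :=
  ∑ x, f x * (if G.Adj u x then 1 else 0)

lemma zmod2_cases (a : ZMod 2) : a = 0 ∨ a = 1 := by revert a; decide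

lemma zmod2_ne_one {a : ZMod 2} (h : a ≠ 1) : a = 0 := (zmod2_cases a).resolve_right h

lemma odd_iff_cast_eq_one (n : ℕ) : Odd n ↔ (n : ZMod 2) = 1 := by
  rw [Nat.odd_iff, ← ZMod.natCast_mod n 2]
  have h : n % 2 = 0 ∨ n % 2 = 1 := by omega
  rcases h with h | h <;> simp [h]

lemma oN_chi (G : SimpleGraph V) (K : Set V) (u : V) :
    oN G (chi K) u = 1 ↔ u ∈ oddNbhd G K := by
  classical
  have h1 : oN G (chi K) u = ∑ x, if x ∈ K ∧ G.Adj u x then (1 : ZMod 2) else 0 := by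
    unfold oN chi
    refine Finset.sum_congr rfl fun x _ => ?_
    by_cases hK : x ∈ K <;> by_cases hA : G.Adj u x <;> simp [hK, hA]
  have h2 : (K ∩ G.neighborSet u).toFinset = Finset.univ.filter (fun x => x ∈ K ∧ G.Adj u x) := by
    ext x; simp [Set.mem_toFinset, SimpleGraph.mem_neighborSet]
  rw [h1, Finset.sum_boole, oddNbhd, Set.mem_setOf_eq, odd_iff_cast_eq_one,
    Set.ncard_eq_toFinset_card', h2]

lemma oddNbhd_induce' {W : Type*} (G : SimpleGraph W) (S : Set W) (K : Set S) (w : S) :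
    w ∈ oddNbhd (G.induce S) K ↔ (w : W) ∈ oddNbhd G (Subtype.val '' K) := by
  unfold oddNbhd
  simp only [Set.mem_setOf_eq]
  rw [← Set.ncard_image_of_injective (K ∩ (G.induce S).neighborSet w) Subtype.val_injective]
  have himg : Subtype.val '' (K ∩ (G.induce S).neighborSet w)
      = (Subtype.val '' K) ∩ G.neighborSet (w : W) := by
    ext x
    simp only [Set.mem_image, Set.mem_inter_iff, SimpleGraph.mem_neighborSet,
      SimpleGraph.comap_adj, SimpleGraph.induce_eq_coe_induce_top]
    constructor
    · rintro ⟨y, ⟨hyK, hyA⟩, rfl⟩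
      refine ⟨⟨y, hyK, rfl⟩, ?_⟩
      exact And.right (And.right hyA)
    · rintro ⟨⟨y, hyK, rfl⟩, hA⟩
      exact ⟨y, ⟨hyK, And.intro w.2 (And.intro y.2 hA)⟩, rfl⟩
  rw [himg]

/-- The guard condition for substituting the correction set of a deleted vertex `u`
into the (corrected) correction set of `v`. -/
def Guard (O : Set V) (lam : V → MPlane) (g : V → Set V) (prec : V → V → Prop)
    (v u : V) : Prop :=
  u ∈ g v ∧ u ∉ (O ∪ {x | lam x = MPlane.XY}) ∧ u ≠ v ∧ prec v u

open Classical in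
/-- The corrected correction function, defined by well-founded recursion along `prec`:
`Fcorr v` is `g v` with the correction set of every deleted vertex `u ∈ g v`
substituted in (as a symmetric difference, i.e. a sum over `ZMod 2`). -/
noncomputable def Fcorr (O : Set V) (lam : V → MPlane) (g : V → Set V)
    (prec : V → V → Prop) (wf : WellFounded (fun u v => prec v u)) : V → V → ZMod 2 :=
  wf.fix (fun v rec => fun w => chi (g v) w +
    ∑ u, if h : Guard O lam g prec v u then rec u h.2.2.2 w else 0)

open Classical in
lemma Fcorr_eq (O : Set V) (lam : V → MPlane) (g : V → Set V)
    (prec : V → V → Prop) (wf : WellFounded (fun u v => prec v u)) (v w : V) :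
    Fcorr O lam g prec wf v w = chi (g v) w +
      ∑ u, if Guard O lam g prec v u then Fcorr O lam g prec wf u w else 0 := by
  unfold Fcorr
  rw [WellFounded.fix_eq]
  simp only [dite_eq_ite]

open Classical in
lemma oN_Fcorr (G : SimpleGraph V) (O : Set V) (lam : V → MPlane) (g : V → Set V)
    (prec : V → V → Prop) (wf : WellFounded (fun u v => prec v u)) (v w : V) :
    oN G (Fcorr O lam g prec wf v) w = oN G (chi (g v)) w +
      ∑ u, if Guard O lam g prec v u then oN G (Fcorr O lam g prec wf u) w else 0 := by
  unfold oN
  simp only [Fcorr_eq O lam g prec wf v, add_mul, Finset.sum_mul, ite_mul, zero_mul]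
  rw [Finset.sum_add_distrib]
  congr 1
  rw [Finset.sum_comm]
  refine Finset.sum_congr rfl fun u _ => ?_
  by_cases hg : Guard O lam g prec v u <;> simp [hg]

variable {G : SimpleGraph V} {I O : Set V} {lam : V → MPlane}
  {g : V → Set V} {prec : V → V → Prop}

lemma Fcorr_master (hG : GFlow G I O lam g prec)
    (wf : WellFounded (fun u v : V => prec v u)) :
    ∀ v, v ∉ O →
      ((∀ w, Fcorr O lam g prec wf v w = 1 → w = v ∨ prec v w) ∧
       (∀ w, oN G (Fcorr O lam g prec wf v) w = 1 → w = v ∨ prec v w) ∧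
       (∀ w, w ∉ (O ∪ {x | lam x = MPlane.XY}) → w ≠ v → Fcorr O lam g prec wf v w = 0) ∧
       (v ∉ (O ∪ {x | lam x = MPlane.XY}) → Fcorr O lam g prec wf v v = 1) ∧
       (lam v = MPlane.XY → Fcorr O lam g prec wf v v = 0 ∧
          oN G (Fcorr O lam g prec wf v) v = 1) ∧
       (∀ w ∈ I, Fcorr O lam g prec wf v w = 0)) := by
  classical
  intro v
  induction v using wf.induction with
  | _ v IH =>
  intro hvO
  set F := Fcorr O lam g prec wf with hF
  have hIH : ∀ u, Guard O lam g prec v u →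
      ((∀ w, F u w = 1 → w = u ∨ prec u w) ∧
       (∀ w, oN G (F u) w = 1 → w = u ∨ prec u w) ∧
       (∀ w, w ∉ (O ∪ {x | lam x = MPlane.XY}) → w ≠ u → F u w = 0) ∧
       (u ∉ (O ∪ {x | lam x = MPlane.XY}) → F u u = 1) ∧
       (lam u = MPlane.XY → F u u = 0 ∧ oN G (F u) u = 1) ∧
       (∀ w ∈ I, F u w = 0)) :=
    fun u hgu => IH u hgu.2.2.2 (fun h => hgu.2.1 (Or.inl h))
  have hterm0 : ∀ w, w ≠ v → ¬ prec v w → ∀ u,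
      (if Guard O lam g prec v u then F u w else 0) = 0 := by
    intro w hwv hnp u
    by_cases hgu : Guard O lam g prec v u
    · rw [if_pos hgu]
      apply zmod2_ne_one
      intro h1
      rcases (hIH u hgu).1 w h1 with h | h
      · exact hnp (h ▸ hgu.2.2.2)
      · exact hnp (hG.trans v u w hgu.2.2.2 h)
    · rw [if_neg hgu]
  have hterm0' : ∀ w, w ≠ v → ¬ prec v w → ∀ u,
      (if Guard O lam g prec v u then oN G (F u) w else 0) = 0 := by
    intro w hwv hnp u
    by_cases hgu : Guard O lam g prec v u
    · rw [if_pos hgu]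
      apply zmod2_ne_one
      intro h1
      rcases (hIH u hgu).2.1 w h1 with h | h
      · exact hnp (h ▸ hgu.2.2.2)
      · exact hnp (hG.trans v u w hgu.2.2.2 h)
    · rw [if_neg hgu]
  have hvv : ∀ u, (if Guard O lam g prec v u then F u v else 0) = 0 := by
    intro u
    by_cases hgu : Guard O lam g prec v u
    · rw [if_pos hgu]
      apply zmod2_ne_one
      intro h1
      rcases (hIH u hgu).1 v h1 with h | h
      · exact hgu.2.2.1 h.symm
      · exact hG.irrefl v (hG.trans v u v hgu.2.2.2 h)
    · rw [if_neg hgu]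
  have hvv' : ∀ u, (if Guard O lam g prec v u then oN G (F u) v else 0) = 0 := by
    intro u
    by_cases hgu : Guard O lam g prec v u
    · rw [if_pos hgu]
      apply zmod2_ne_one
      intro h1
      rcases (hIH u hgu).2.1 v h1 with h | h
      · exact hgu.2.2.1 h.symm
      · exact hG.irrefl v (hG.trans v u v hgu.2.2.2 h)
    · rw [if_neg hgu]
  have hA : ∀ w, F v w = 1 → w = v ∨ prec v w := by
    intro w hw
    by_contra hcon
    push_neg at hcon
    obtain ⟨hwv, hnp⟩ := hcon
    rw [hF, Fcorr_eq] at hw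
    have h1 : chi (g v) w = 0 := by
      unfold chi
      rw [if_neg]
      intro hmem
      exact hnp (hG.g1 v hvO w hmem hwv)
    rw [h1, Finset.sum_eq_zero (fun u _ => hterm0 w hwv hnp u)] at hw
    simp at hw
  have hB : ∀ w, oN G (F v) w = 1 → w = v ∨ prec v w := by
    intro w hw
    by_contra hcon
    push_neg at hcon
    obtain ⟨hwv, hnp⟩ := hcon
    rw [hF, oN_Fcorr] at hw
    have h1 : oN G (chi (g v)) w = 0 := by
      apply zmod2_ne_one
      intro h1
      exact hnp (hG.g2 v hvO w ((oN_chi G (g v) w).1 h1) hwv)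
    rw [h1, Finset.sum_eq_zero (fun u _ => hterm0' w hwv hnp u)] at hw
    simp at hw
  have hC : ∀ w, w ∉ (O ∪ {x | lam x = MPlane.XY}) → w ≠ v → F v w = 0 := by
    intro w hwS hwv
    rw [hF, Fcorr_eq]
    by_cases hwg : w ∈ g v
    · have hpvw : prec v w := hG.g1 v hvO w hwg hwv
      have hwO : w ∉ O := fun h => hwS (Or.inl h)
      have hguardw : Guard O lam g prec v w := ⟨hwg, hwS, hwv, hpvw⟩
      have hsum : (∑ u, if Guard O lam g prec v u then F u w else 0) = F w w := by
        rw [Finset.sum_eq_single_of_mem w (Finset.mem_univ w)]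
        · rw [if_pos hguardw]
        · intro u _ huw
          by_cases hgu : Guard O lam g prec v u
          · rw [if_pos hgu]
            exact (hIH u hgu).2.2.1 w hwS (Ne.symm huw)
          · rw [if_neg hgu]
      have hFww : F w w = 1 := (IH w hpvw hwO).2.2.2.1 hwS
      have hchi : chi (g v) w = 1 := by unfold chi; rw [if_pos hwg]
      rw [hsum, hFww, hchi]
      decide
    · have hchi : chi (g v) w = 0 := by unfold chi; rw [if_neg hwg]
      have hsum : (∑ u, if Guard O lam g prec v u then F u w else 0) = 0 := by
        apply Finset.sum_eq_zero
        intro u _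
        by_cases hgu : Guard O lam g prec v u
        · rw [if_pos hgu]
          have huw : w ≠ u := fun h => hwg (h ▸ hgu.1)
          exact (hIH u hgu).2.2.1 w hwS huw
        · rw [if_neg hgu]
      rw [hsum, hchi, add_zero]
  have hD : v ∉ (O ∪ {x | lam x = MPlane.XY}) → F v v = 1 := by
    intro hvS
    have hvg : v ∈ g v := by
      cases hl : lam v with
      | XY => exact absurd (Or.inr hl) hvS
      | XZ => exact (hG.gXZ v hvO hl).1
      | YZ => exact (hG.gYZ v hvO hl).1
    have hchi : chi (g v) v = 1 := by unfold chi; rw [if_pos hvg]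
    rw [hF, Fcorr_eq, hchi, Finset.sum_eq_zero (fun u _ => hvv u), add_zero]
  have hE : lam v = MPlane.XY → F v v = 0 ∧ oN G (F v) v = 1 := by
    intro hl
    obtain ⟨hng, hodd⟩ := hG.gXY v hvO hl
    constructor
    · have hchi : chi (g v) v = 0 := by unfold chi; rw [if_neg hng]
      rw [hF, Fcorr_eq, hchi, Finset.sum_eq_zero (fun u _ => hvv u), add_zero]
    · have hchi : oN G (chi (g v)) v = 1 := (oN_chi G (g v) v).2 hodd
      rw [hF, oN_Fcorr, hchi, Finset.sum_eq_zero (fun u _ => hvv' u), add_zero]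
  have hFi : ∀ w ∈ I, F v w = 0 := by
    intro w hwI
    have hchi : chi (g v) w = 0 := by
      unfold chi
      rw [if_neg]
      intro hmem
      have := hG.noInput v hvO
      exact absurd (Set.mem_inter hmem hwI) (by rw [this]; exact Set.notMem_empty w)
    have hsum : (∑ u, if Guard O lam g prec v u then F u w else 0) = 0 := by
      apply Finset.sum_eq_zero
      intro u _
      by_cases hgu : Guard O lam g prec v u
      · rw [if_pos hgu]
        exact (hIH u hgu).2.2.2.2.2 w hwI
      · rw [if_neg hgu]
    rw [hF, Fcorr_eq, hchi, hsum, add_zero]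
  exact ⟨hA, hB, hC, hD, hE, hFi⟩

end Aux

/-- Deleting all non-XY-measured non-output vertices (i.e. restricting to the
induced subgraph on `O ∪ {v | λ(v) = XY}`) preserves the existence of gflow. -/

theorem gflow_restrict_XY {V : Type*} [Fintype V]
    (G : SimpleGraph V) (I O : Set V) (lam : V → MPlane)
    (h : ∃ g prec, GFlow G I O lam g prec) :
    ∃ (g' : ↥(O ∪ {v : V | lam v = MPlane.XY}) → Set ↥(O ∪ {v : V | lam v = MPlane.XY}))
      (prec' : ↥(O ∪ {v : V | lam v = MPlane.XY}) → ↥(O ∪ {v : V | lam v = MPlane.XY}) → Prop),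
      GFlow (G.induce (O ∪ {v : V | lam v = MPlane.XY}))
        (Subtype.val ⁻¹' I) (Subtype.val ⁻¹' O)
        (fun v => lam v.val) g' prec' := by
  classical
  obtain ⟨g, prec, hG⟩ := h
  haveI : IsTrans V (fun u v => prec v u) := ⟨fun a b c h1 h2 => hG.trans c b a h2 h1⟩
  haveI : IsIrrefl V (fun u v => prec v u) := ⟨fun a => hG.irrefl a⟩
  have wf : WellFounded (fun u v : V => prec v u) :=
    Finite.wellFounded_of_trans_of_irrefl _
  have master := Fcorr_master hG wf
  set S : Set V := O ∪ {v : V | lam v = MPlane.XY} with hS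
  set F : V → V → ZMod 2 := Fcorr O lam g prec wf with hFdef
  refine ⟨fun v => {w : S | F v.1 w.1 = 1}, fun u v => prec u.1 v.1, ?_⟩
  have himg : ∀ v : S, v.1 ∉ O →
      Subtype.val '' {w : S | F v.1 w.1 = 1} = {w | F v.1 w = 1} := by
    intro v hvO
    ext x
    simp only [Set.mem_image, Set.mem_setOf_eq]
    constructor
    · rintro ⟨y, hy, rfl⟩; exact hy
    · intro hx
      have hxS : x ∈ S := by
        by_contra hxS
        by_cases hxv : x = v.1
        · exact hxS (hxv ▸ v.2)
        · rw [(master v.1 hvO).2.2.1 x hxS hxv] at hx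
          simp at hx
      exact ⟨⟨x, hxS⟩, hx, rfl⟩
  have hchiF : ∀ v : S, chi {w | F v.1 w = 1} = F v.1 := by
    intro v
    funext x
    unfold chi
    rcases zmod2_cases (F v.1 x) with h | h <;> simp [h]
  have hodd : ∀ (v w : S), v.1 ∉ O →
      (w ∈ oddNbhd (G.induce S) {u : S | F v.1 u.1 = 1} ↔ oN G (F v.1) w.1 = 1) := by
    intro v w hvO
    rw [oddNbhd_induce', himg v hvO, ← oN_chi, hchiF v]
  refine
    { irrefl := fun v => hG.irrefl v.1
      trans := fun u v w h1 h2 => hG.trans u.1 v.1 w.1 h1 h2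
      noInput := ?_
      g1 := ?_
      g2 := ?_
      gXY := ?_
      gXZ := ?_
      gYZ := ?_ }
  · intro v hvO
    ext w
    simp only [Set.mem_inter_iff, Set.mem_setOf_eq, Set.mem_preimage, Set.mem_empty_iff_false,
      iff_false, not_and]
    intro hw hwI
    rw [(master v.1 hvO).2.2.2.2.2 w.1 hwI] at hw
    simp at hw
  · intro v hvO w hw hwv
    rcases (master v.1 hvO).1 w.1 hw with h | h
    · exact absurd (Subtype.ext h) hwv
    · exact h
  · intro v hvO w hw hwv
    rcases (master v.1 hvO).2.1 w.1 ((hodd v w hvO).1 hw) with h | h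
    · exact absurd (Subtype.ext h) hwv
    · exact h
  · intro v hvO hl
    obtain ⟨h0, h1⟩ := (master v.1 hvO).2.2.2.2.1 hl
    constructor
    · simp only [Set.mem_setOf_eq, h0]
      simp
    · exact (hodd v v hvO).2 h1
  · intro v hvO hl
    exfalso
    rcases v.2 with h | h
    · exact hvO h
    · rw [Set.mem_setOf_eq] at h
      rw [h] at hl
      exact MPlane.noConfusion hl
  · intro v hvO hl
    exfalso
    rcases v.2 with h | h
    · exact hvO h
    · rw [Set.mem_setOf_eq] at h
      rw [h] at hl
      exact MPlane.noConfusion hl
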